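/- arXiv:2402.19311 — 2 statements merged into one kernel-verified Lean document; each statement's English description precedes it below -/
import Mathlib

section
/- In the setting of the fundamental moves on configurations n ∈ {0,…,2S}^L (cyclic), for any indices j_1 ≠ j_2 with n_{j_1} > 0 and n_{j_2} < 2S, there exists a composition R_{j_1,j_2} of allowed moves P^{±∓}_j and Q^{±}_j mapping n to the configuration obtained by decreasing n_{j_1} by 1 and increasing n_{j_2} by 1, leaving all other entries unchanged. -/
/-- Move `P⁺⁻_j`: `n_j ↦ n_j + 1`, `n_{j+1} ↦ n_{j+1} − 1` (cyclic), allowed when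
`n_j < 2S` and `n_{j+1} > 0`. -/
def StepPpm (L twoS : ℕ) [NeZero L] (n n' : Fin L → ℕ) : Prop :=
  ∃ j : Fin L, n j < twoS ∧ 0 < n (j + 1) ∧
    n' = Function.update (Function.update n j (n j + 1)) (j + 1) (n (j + 1) - 1)

/-- Move `P⁻⁺_j`: `n_j ↦ n_j − 1`, `n_{j+1} ↦ n_{j+1} + 1` (cyclic), allowed when
`n_j > 0` and `n_{j+1} < 2S`. -/
def StepPmp (L twoS : ℕ) [NeZero L] (n n' : Fin L → ℕ) : Prop :=
  ∃ j : Fin L, 0 < n j ∧ n (j + 1) < twoS ∧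
    n' = Function.update (Function.update n j (n j - 1)) (j + 1) (n (j + 1) + 1)

/-- Move `Q⁺_j`: `n_j ↦ n_j + 2`, allowed when `n_j ≤ 2S − 2`. -/
def StepQp (L twoS : ℕ) [NeZero L] (n n' : Fin L → ℕ) : Prop :=
  ∃ j : Fin L, n j + 2 ≤ twoS ∧ n' = Function.update n j (n j + 2)

/-- Move `Q⁻_j`: `n_j ↦ n_j − 2`, allowed when `n_j ≥ 2`. -/
def StepQm (L twoS : ℕ) [NeZero L] (n n' : Fin L → ℕ) : Prop :=
  ∃ j : Fin L, 2 ≤ n j ∧ n' = Function.update n j (n j - 2)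

/-- One allowed fundamental move. -/
def Step (L twoS : ℕ) [NeZero L] (n n' : Fin L → ℕ) : Prop :=
  StepPpm L twoS n n' ∨ StepPmp L twoS n n' ∨ StepQp L twoS n n' ∨ StepQm L twoS n n'

open Fin.NatCast Fin.CommRing

lemma transfer_aux (L twoS : ℕ) [NeZero L] (hL : 2 ≤ L) (hS : 1 ≤ twoS) :
    ∀ d : ℕ, 1 ≤ d → d < L → ∀ (n : Fin L → ℕ), (∀ j, n j ≤ twoS) →
    ∀ j₁ : Fin L, 0 < n j₁ → n (j₁ + (d : Fin L)) < twoS →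
    Relation.ReflTransGen (Step L twoS) n
      (Function.update (Function.update n j₁ (n j₁ - 1)) (j₁ + (d : Fin L)) (n (j₁ + (d : Fin L)) + 1)) := by
  have hv1 : (1 : Fin L).val = 1 := by
    simp [Fin.val_one', Nat.mod_eq_of_lt hL]
  have h10 : (1 : Fin L) ≠ 0 := by
    intro h
    have := congrArg Fin.val h
    rw [hv1] at this
    simp at this
  intro d
  induction d with
  | zero => omega
  | succ d ih =>
    intro _ hdL n hn j₁ h1 h2
    by_cases hd0 : d = 0
    · -- base case: distance 1, a single P⁻⁺ move
      subst hd0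
      have hcast : ((1 : ℕ) : Fin L) = (1 : Fin L) := by norm_cast
      rw [hcast] at h2 ⊢
      exact Relation.ReflTransGen.single (Or.inr (Or.inl ⟨j₁, h1, h2, rfl⟩))
    · -- inductive step
      have hd1 : 1 ≤ d := by omega
      have hdalt : ((d + 1 : ℕ) : Fin L) = 1 + ((d : ℕ) : Fin L) := by push_cast; ring
      obtain ⟨a, ha⟩ : ∃ a : Fin L, a = j₁ + 1 := ⟨_, rfl⟩
      obtain ⟨j₂, hj₂def⟩ : ∃ x : Fin L, x = j₁ + ((d+1 : ℕ) : Fin L) := ⟨_, rfl⟩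
      rw [← hj₂def] at h2 ⊢
      have hj₂ : j₂ = a + ((d : ℕ) : Fin L) := by
        rw [hj₂def, hdalt, ha]; ring
      have hvd : ((d : ℕ) : Fin L).val = d := Fin.val_cast_of_lt (by omega)
      have hvd1 : (((d+1) : ℕ) : Fin L).val = d + 1 := Fin.val_cast_of_lt hdL
      have haj₁ : a ≠ j₁ := by
        rw [ha]
        intro h
        rw [add_eq_left] at h
        exact h10 h
      have hj₂j₁ : j₂ ≠ j₁ := by
        rw [hj₂def]
        intro h
        rw [add_eq_left] at h
        have := congrArg Fin.val h
        rw [hvd1] at this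
        simp at this
      have hj₂a : j₂ ≠ a := by
        rw [hj₂def, ha]
        intro h
        have hcan : ((d+1 : ℕ) : Fin L) = (1 : Fin L) := add_left_cancel h
        have := congrArg Fin.val hcan
        rw [hvd1, hv1] at this
        omega
      by_cases hca : n a < twoS
      · -- first move one unit from j₁ to a, then recurse from a to j₂
        obtain ⟨n', hn'⟩ : ∃ m : Fin L → ℕ,
            m = Function.update (Function.update n j₁ (n j₁ - 1)) a (n a + 1) := ⟨_, rfl⟩
        have step1 : Step L twoS n n' := Or.inr (Or.inl ⟨j₁, h1, by rw [← ha]; exact hca,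
          by rw [hn', ha]⟩)
        have hn'B : ∀ j, n' j ≤ twoS := by
          intro x
          have hx := hn x
          have hx1 := hn j₁
          have hxa := hn a
          rw [hn']
          simp only [Function.update_apply]
          split_ifs <;> subst_vars <;> omega
        have hn'a : 0 < n' a := by
          rw [hn']; simp
        have hn'j₂ : n' j₂ < twoS := by
          rw [hn']
          simp only [Function.update_apply, if_neg hj₂a, if_neg hj₂j₁]
          exact h2
        have rec' := ih hd1 (by omega) n' hn'B a hn'a (by rw [← hj₂]; exact hn'j₂)
        rw [← hj₂] at rec'
        have heq : Function.update (Function.update n' a (n' a - 1)) j₂ (n' j₂ + 1)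
            = Function.update (Function.update n j₁ (n j₁ - 1)) j₂ (n j₂ + 1) := by
          funext x
          simp only [hn', Function.update_apply]
          split_ifs <;> subst_vars <;>
            first
              | rfl
              | omega
              | (exact absurd rfl (by assumption))
        rw [heq] at rec'
        exact Relation.ReflTransGen.head step1 rec'
      · -- a is full: first recurse from a to j₂, then move one unit from j₁ to a
        have hca' : n a = twoS := le_antisymm (hn a) (by omega)
        have rec' := ih hd1 (by omega) n hn a (by omega) (by rw [← hj₂]; exact h2)
        rw [← hj₂] at rec'
        obtain ⟨n'', hn''⟩ : ∃ m : Fin L → ℕ,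
            m = Function.update (Function.update n a (n a - 1)) j₂ (n j₂ + 1) := ⟨_, rfl⟩
        rw [← hn''] at rec'
        have hn''j₁ : 0 < n'' j₁ := by
          rw [hn'']
          simp only [Function.update_apply, if_neg (Ne.symm hj₂j₁), if_neg (Ne.symm haj₁)]
          exact h1
        have hn''a : n'' a < twoS := by
          rw [hn'']
          simp only [Function.update_apply]
          rw [if_neg (Ne.symm hj₂a)]
          split_ifs with h
          · omega
          · exact absurd trivial h
        have step2 : Step L twoS n''
            (Function.update (Function.update n'' j₁ (n'' j₁ - 1)) a (n'' a + 1)) :=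
          Or.inr (Or.inl ⟨j₁, hn''j₁, by rw [← ha]; exact hn''a, by rw [ha]⟩)
        have heq : Function.update (Function.update n'' j₁ (n'' j₁ - 1)) a (n'' a + 1)
            = Function.update (Function.update n j₁ (n j₁ - 1)) j₂ (n j₂ + 1) := by
          funext x
          simp only [hn'', Function.update_apply]
          split_ifs <;> subst_vars <;>
            first
              | rfl
              | omega
              | (exact absurd rfl (by assumption))
        rw [← heq]
        exact Relation.ReflTransGen.tail rec' step2

/-- Lemma on `R_{j₁,j₂}`: for `j₁ ≠ j₂` with `n_{j₁} > 0` and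
`n_{j₂} < 2S`, some composition of allowed fundamental moves decreases `n_{j₁}`
by 1 and increases `n_{j₂}` by 1, leaving all other entries unchanged. -/
theorem move_R_exists (L twoS : ℕ) [NeZero L] (hL : 2 ≤ L) (hLeven : Even L)
    (hS : 1 ≤ twoS)
    (n : Fin L → ℕ) (hn : ∀ j, n j ≤ twoS)
    (j₁ j₂ : Fin L) (hne : j₁ ≠ j₂) (h1 : 0 < n j₁) (h2 : n j₂ < twoS) :
    Relation.ReflTransGen (Step L twoS) n
      (Function.update (Function.update n j₁ (n j₁ - 1)) j₂ (n j₂ + 1)) := by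
  set d : ℕ := (j₂ - j₁).val with hd
  have hcast : ((d : ℕ) : Fin L) = j₂ - j₁ := by rw [hd]; exact Fin.cast_val_eq_self _
  have hj₂ : j₂ = j₁ + ((d : ℕ) : Fin L) := by rw [hcast]; ring
  have hdL : d < L := (j₂ - j₁).isLt
  have hd1 : 1 ≤ d := by
    rcases Nat.eq_zero_or_pos d with h | h
    · exfalso
      apply hne
      have : ((d : ℕ) : Fin L) = 0 := by rw [h]; simp
      rw [this] at hj₂; simpa using hj₂.symm
    · exact h
  have := transfer_aux L twoS hL hS d hd1 hdL n hn j₁ h1 (by rw [← hj₂]; exact h2)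
  rw [← hj₂] at this
  exact this
end

section
/- Let s^x, s^y, s^z be the spin-1/2 matrices (halves of the Pauli matrices). For Δ ∈ (0,1], set φ = arccos(√((1+Δ)/2)) and U_j(φ) the rotation of the j-th spin about the y-axis by angle (−1)^j φ. Then under the staggered rotation R(φ) = ⊗_j exp(i(−1)^j φ s_j^y), the XYX Hamiltonian H = J̃ ∑_j (s_j^x s_{j+1}^x + Δ s_j^y s_{j+1}^y + s_j^z s_{j+1}^z) − H̃ ∑_j s_j^z with H̃ = J̃√(2(1+Δ)) transforms into J̃ ∑_j [ Δ s_j·s_{j+1} − (1+Δ) s_j^z + (−1)^j √(1−Δ²)(s_j^x s_{j+1}^z − s_j^z s_{j+1}^x − s_j^x) ]. -/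
open Matrix Complex

noncomputable section

/-- Spin-1/2 matrix `s^x = σ^x/2`. -/
def sx : Matrix (Fin 2) (Fin 2) ℂ := !![0, 1/2; 1/2, 0]
/-- Spin-1/2 matrix `s^y = σ^y/2`. -/
def sy : Matrix (Fin 2) (Fin 2) ℂ := !![0, -I/2; I/2, 0]
/-- Spin-1/2 matrix `s^z = σ^z/2`. -/
def sz : Matrix (Fin 2) (Fin 2) ℂ := !![1/2, 0; 0, -1/2]

/-- Tensor (Kronecker) product of one `2×2` matrix per site, as a matrix on the
`L`-site Hilbert space indexed by `Fin L → Fin 2`. -/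
def kronAll (L : ℕ) (A : Fin L → Matrix (Fin 2) (Fin 2) ℂ) :
    Matrix (Fin L → Fin 2) (Fin L → Fin 2) ℂ :=
  fun x y => ∏ j : Fin L, A j (x j) (y j)

/-- The one-site operator `A` acting on site `j` (identity elsewhere). -/
def onSite (L : ℕ) (j : Fin L) (A : Matrix (Fin 2) (Fin 2) ℂ) :
    Matrix (Fin L → Fin 2) (Fin L → Fin 2) ℂ :=
  kronAll L (fun k => if k = j then A else 1)

/-- The staggered rotation `R(φ) = ⊗_j exp(i(−1)^j φ s_j^y)`. -/
def Rstag (L : ℕ) (φ : ℝ) : Matrix (Fin L → Fin 2) (Fin L → Fin 2) ℂ :=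
  kronAll L (fun j => NormedSpace.exp ((I * (-1 : ℂ) ^ (j : ℕ) * (φ : ℂ)) • sy))

/-- The spin-1/2 XYX chain in a transverse field (periodic boundary conditions):
`H = J̃ ∑_j (s_j^x s_{j+1}^x + Δ s_j^y s_{j+1}^y + s_j^z s_{j+1}^z) − H̃ ∑_j s_j^z`. -/
def Hmap (L : ℕ) [NeZero L] (Jt Δ Ht : ℝ) :
    Matrix (Fin L → Fin 2) (Fin L → Fin 2) ℂ :=
  (Jt : ℂ) • (∑ j : Fin L,
      (onSite L j sx * onSite L (j + 1) sx
        + (Δ : ℂ) • (onSite L j sy * onSite L (j + 1) sy)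
        + onSite L j sz * onSite L (j + 1) sz))
    - (Ht : ℂ) • ∑ j : Fin L, onSite L j sz

/-! ### Auxiliary 2×2 matrices -/

def J2 : Matrix (Fin 2) (Fin 2) ℂ := !![0, 1; -1, 0]

lemma J2_mul_J2 : J2 * J2 = -1 := by
  ext i j
  fin_cases i <;> fin_cases j <;>
    simp [J2, Matrix.mul_apply, Fin.sum_univ_two, Matrix.one_apply]

def Rot (t : ℝ) : Matrix (Fin 2) (Fin 2) ℂ :=
  !![(Real.cos t : ℂ), (Real.sin t : ℂ); -(Real.sin t : ℂ), (Real.cos t : ℂ)]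

lemma exp_smul_J2 (t : ℝ) : NormedSpace.exp ((t : ℂ) • J2) = Rot t := by
  letI : SeminormedRing (Matrix (Fin 2) (Fin 2) ℂ) := Matrix.linftyOpSemiNormedRing
  letI : NormedRing (Matrix (Fin 2) (Fin 2) ℂ) := Matrix.linftyOpNormedRing
  letI : NormedAlgebra ℝ (Matrix (Fin 2) (Fin 2) ℂ) := Matrix.linftyOpNormedAlgebra
  letI : NormedAlgebra ℂ (Matrix (Fin 2) (Fin 2) ℂ) := Matrix.linftyOpNormedAlgebra
  set f : ℂ →ₐ[ℝ] Matrix (Fin 2) (Fin 2) ℂ := Complex.liftAux J2 J2_mul_J2 with hf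
  have hcont : Continuous f := f.toLinearMap.continuous_of_finiteDimensional
  have h2 : (t : ℂ) • J2 = f ((t : ℂ) * I) := by
    rw [hf, Complex.liftAux_apply]
    simp
  rw [h2]
  refine (NormedSpace.map_exp f hcont _).symm.trans ?_
  rw [← Complex.exp_eq_exp_ℂ, Complex.exp_mul_I]
  rw [hf, Complex.liftAux_apply]
  ext i j
  fin_cases i <;> fin_cases j <;>
    simp [Rot, J2, Algebra.algebraMap_eq_smul_one, Matrix.one_apply]

lemma Rot_mul_Rot_neg (t : ℝ) : Rot t * Rot (-t) = 1 := by
  have h := Complex.sin_sq_add_cos_sq (t : ℂ)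
  ext i j
  fin_cases i <;> fin_cases j <;>
    simp [Rot, Matrix.mul_apply, Fin.sum_univ_two, Matrix.one_apply, Real.sin_neg,
      Real.cos_neg] <;>
    first
      | ring1
      | linear_combination h

lemma Rot_neg_mul_Rot (t : ℝ) : Rot (-t) * Rot t = 1 := by
  have := Rot_mul_Rot_neg (-t); rwa [neg_neg] at this

lemma conj_sx (t : ℝ) : Rot (-t) * sx * Rot t
    = ((Real.cos (2*t) : ℝ) : ℂ) • sx - ((Real.sin (2*t) : ℝ) : ℂ) • sz := by
  have h2c : Complex.cos ((t : ℂ) * 2) = Complex.cos t ^ 2 - Complex.sin t ^ 2 := by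
    rw [mul_comm]; exact Complex.cos_two_mul' _
  have h2s : Complex.sin ((t : ℂ) * 2) = 2 * Complex.sin t * Complex.cos t := by
    rw [mul_comm]; exact Complex.sin_two_mul _
  ext i j
  fin_cases i <;> fin_cases j <;>
    simp [Rot, sx, sz, Matrix.mul_apply, Fin.sum_univ_two, Real.sin_neg, Real.cos_neg] <;>
    (try simp only [mul_comm (2 : ℂ) (t : ℂ)]) <;>
    first
      | ring1
      | linear_combination (1/2 : ℂ) * h2c
      | linear_combination (-1/2 : ℂ) * h2c
      | linear_combination (1/2 : ℂ) * h2s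
      | linear_combination (-1/2 : ℂ) * h2s

lemma conj_sz (t : ℝ) : Rot (-t) * sz * Rot t
    = ((Real.sin (2*t) : ℝ) : ℂ) • sx + ((Real.cos (2*t) : ℝ) : ℂ) • sz := by
  have h2c : Complex.cos ((t : ℂ) * 2) = Complex.cos t ^ 2 - Complex.sin t ^ 2 := by
    rw [mul_comm]; exact Complex.cos_two_mul' _
  have h2s : Complex.sin ((t : ℂ) * 2) = 2 * Complex.sin t * Complex.cos t := by
    rw [mul_comm]; exact Complex.sin_two_mul _
  ext i j
  fin_cases i <;> fin_cases j <;>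
    simp [Rot, sx, sz, Matrix.mul_apply, Fin.sum_univ_two, Real.sin_neg, Real.cos_neg] <;>
    (try simp only [mul_comm (2 : ℂ) (t : ℂ)]) <;>
    first
      | ring1
      | linear_combination (1/2 : ℂ) * h2c
      | linear_combination (-1/2 : ℂ) * h2c
      | linear_combination (1/2 : ℂ) * h2s
      | linear_combination (-1/2 : ℂ) * h2s

lemma conj_sy (t : ℝ) : Rot (-t) * sy * Rot t = sy := by
  have h := Complex.sin_sq_add_cos_sq (t : ℂ)
  ext i j
  fin_cases i <;> fin_cases j <;>
    simp [Rot, sy, Matrix.mul_apply, Fin.sum_univ_two, Real.sin_neg, Real.cos_neg] <;>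
    first
      | ring1
      | linear_combination (I/2 : ℂ) * h
      | linear_combination (-I/2 : ℂ) * h

/-! ### Kronecker-product lemmas -/

lemma kronAll_mul (L : ℕ) (A B : Fin L → Matrix (Fin 2) (Fin 2) ℂ) :
    kronAll L A * kronAll L B = kronAll L (fun j => A j * B j) := by
  ext x y
  show ∑ z : Fin L → Fin 2, (∏ j, A j (x j) (z j)) * (∏ j, B j (z j) (y j))
      = ∏ j, (A j * B j) (x j) (y j)
  have h : ∀ j : Fin L, (A j * B j) (x j) (y j) = ∑ k : Fin 2, A j (x j) k * B j k (y j) :=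
    fun j => Matrix.mul_apply
  rw [Finset.prod_congr rfl fun j _ => h j, Finset.prod_univ_sum, Fintype.piFinset_univ]
  exact Finset.sum_congr rfl fun z _ => (Finset.prod_mul_distrib).symm

lemma kronAll_one (L : ℕ) : kronAll L (fun _ => (1 : Matrix (Fin 2) (Fin 2) ℂ)) = 1 := by
  ext x y
  show (∏ j : Fin L, (1 : Matrix (Fin 2) (Fin 2) ℂ) (x j) (y j)) = (1 : Matrix _ _ ℂ) x y
  by_cases h : x = y
  · subst h; simp [Matrix.one_apply]
  · rw [Matrix.one_apply_ne h]
    obtain ⟨j, hj⟩ := Function.ne_iff.mp h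
    exact Finset.prod_eq_zero (Finset.mem_univ j) (Matrix.one_apply_ne hj)

lemma onSite_apply (L : ℕ) (j : Fin L) (A : Matrix (Fin 2) (Fin 2) ℂ)
    (x y : Fin L → Fin 2) :
    onSite L j A x y
      = A (x j) (y j) * ∏ k ∈ Finset.univ.erase j, (1 : Matrix (Fin 2) (Fin 2) ℂ) (x k) (y k) := by
  show (∏ k : Fin L, (if k = j then A else 1) (x k) (y k)) = _
  rw [← Finset.mul_prod_erase _ _ (Finset.mem_univ j), if_pos rfl]
  congr 1
  exact Finset.prod_congr rfl fun k hk => by rw [if_neg (Finset.ne_of_mem_erase hk)]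

lemma onSite_smul (L : ℕ) (j : Fin L) (a : ℂ) (A : Matrix (Fin 2) (Fin 2) ℂ) :
    onSite L j (a • A) = a • onSite L j A := by
  ext x y
  simp only [onSite_apply, Matrix.smul_apply, smul_eq_mul]
  ring

lemma onSite_add (L : ℕ) (j : Fin L) (A B : Matrix (Fin 2) (Fin 2) ℂ) :
    onSite L j (A + B) = onSite L j A + onSite L j B := by
  ext x y
  simp only [onSite_apply, Matrix.add_apply]
  ring

lemma onSite_sub (L : ℕ) (j : Fin L) (A B : Matrix (Fin 2) (Fin 2) ℂ) :
    onSite L j (A - B) = onSite L j A - onSite L j B := by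
  ext x y
  simp only [onSite_apply, Matrix.sub_apply]
  ring

/-! ### Algebraic helper lemmas -/

lemma conj_mul_split {n : Type*} [Fintype n] [DecidableEq n]
    (R R' P Q : Matrix n n ℂ) (h : R * R' = 1) :
    R' * (P * Q) * R = (R' * P * R) * (R' * Q * R) := by
  symm
  calc (R' * P * R) * (R' * Q * R) = R' * P * (R * R') * (Q * R) := by noncomm_ring
    _ = R' * (P * Q) * R := by rw [h]; noncomm_ring

lemma per_site {A : Type*} [Ring A] [Algebra ℂ A]
    (X X' Y Y' Z Z' : A) (jt ht c s ε d r : ℂ)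
    (hε : ε * ε = 1)
    (hd : c * c - s * s = d) (hr : 2 * (c * s) = r)
    (hhs : ht * s = jt * r) (hhc : ht * c = jt * (1 + d)) :
    jt • ((c • X - (ε * s) • Z) * (c • X' + (ε * s) • Z')
        + d • (Y * Y')
        + ((ε * s) • X + c • Z) * ((-(ε * s)) • X' + c • Z'))
      - ht • ((ε * s) • X + c • Z)
    = jt • (d • (X * X' + Y * Y' + Z * Z') - (1 + d) • Z
        + ε • r • (X * Z' - Z * X' - X)) := by
  rcases mul_self_eq_one_iff.mp hε with rfl | rfl <;>
    subst hd hr <;>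
    simp only [mul_add, add_mul, mul_sub, sub_mul, smul_add, smul_sub, smul_smul,
      smul_mul_assoc, mul_smul_comm] <;>
    match_scalars <;>
    first
      | ring1
      | linear_combination hhs
      | linear_combination -hhs
      | linear_combination hhc
      | linear_combination -hhc

lemma neg_one_pow_congr' {a b : ℕ} (h : a % 2 = b % 2) : (-1 : ℂ) ^ a = (-1 : ℂ) ^ b := by
  rcases Nat.even_or_odd a with ha | ha
  · have hb : Even b := Nat.even_iff.mpr (by rw [← h]; exact Nat.even_iff.mp ha)
    rw [ha.neg_one_pow, hb.neg_one_pow]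
  · have hb : Odd b := Nat.odd_iff.mpr (by rw [← h]; exact Nat.odd_iff.mp ha)
    rw [ha.neg_one_pow, hb.neg_one_pow]

lemma fin_flip (L : ℕ) [NeZero L] (hL : 2 ∣ L) (j : Fin L) :
    (-1 : ℂ) ^ (((j + 1) : Fin L) : ℕ) = -((-1 : ℂ) ^ ((j : ℕ))) := by
  have m2 : ((1 : Fin L) : ℕ) ≡ 1 [MOD L] := by
    rw [Fin.val_one']; exact Nat.mod_modEq 1 L
  have m3 : ((j + 1 : Fin L) : ℕ) ≡ (j : ℕ) + 1 [MOD L] := by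
    rw [Fin.val_add]
    exact (Nat.mod_modEq _ _).trans (Nat.ModEq.add_left _ m2)
  have h2 : ((j + 1 : Fin L) : ℕ) % 2 = ((j : ℕ) + 1) % 2 := m3.of_dvd hL
  rw [neg_one_pow_congr' h2, pow_succ]; ring

/-- on the classical line `H̃ = J̃√(2(1+Δ))` with
`φ = arccos(√((1+Δ)/2))`, the staggered rotation transforms the XYX Hamiltonian as
`R(φ)⁻¹ H R(φ) = J̃ ∑_j [Δ s_j·s_{j+1} − (1+Δ)s_j^z
  + (−1)^j √(1−Δ²)(s_j^x s_{j+1}^z − s_j^z s_{j+1}^x − s_j^x)]`. -/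
theorem xyx_classical_line_rotation (L : ℕ) [NeZero L] (hLeven : Even L)
    (Jt Δ : ℝ) (hJ : 0 < Jt) (hΔ0 : 0 < Δ) (hΔ1 : Δ ≤ 1)
    (φ : ℝ) (hφ : φ = Real.arccos (Real.sqrt ((1 + Δ) / 2))) :
    (Rstag L φ)⁻¹ * Hmap L Jt Δ (Jt * Real.sqrt (2 * (1 + Δ))) * Rstag L φ
      = (Jt : ℂ) • ∑ j : Fin L,
          ((Δ : ℂ) • (onSite L j sx * onSite L (j + 1) sx
              + onSite L j sy * onSite L (j + 1) sy
              + onSite L j sz * onSite L (j + 1) sz)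
            - ((1 : ℂ) + (Δ : ℂ)) • onSite L j sz
            + (-1 : ℂ) ^ (j : ℕ) • ((Real.sqrt (1 - Δ ^ 2) : ℝ) : ℂ) •
                (onSite L j sx * onSite L (j + 1) sz
                  - onSite L j sz * onSite L (j + 1) sx
                  - onSite L j sx)) := by
  -- scalar groundwork
  set c : ℝ := Real.cos φ with hcdef
  set s : ℝ := Real.sin φ with hsdef
  have hΔ2 : (0:ℝ) ≤ (1 + Δ) / 2 := by linarith
  have hΔ3 : (0:ℝ) ≤ (1 - Δ) / 2 := by linarith
  have hcos : c = Real.sqrt ((1 + Δ) / 2) := by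
    rw [hcdef, hφ]
    exact Real.cos_arccos (le_trans (by norm_num) (Real.sqrt_nonneg _))
      (Real.sqrt_le_one.mpr (by linarith))
  have hsin : s = Real.sqrt ((1 - Δ) / 2) := by
    rw [hsdef, hφ, Real.sin_arccos, Real.sq_sqrt hΔ2]
    congr 1; ring
  have hdR : c * c - s * s = Δ := by
    rw [hcos, hsin, Real.mul_self_sqrt hΔ2, Real.mul_self_sqrt hΔ3]; ring
  have hrR : 2 * (c * s) = Real.sqrt (1 - Δ ^ 2) := by
    rw [hcos, hsin, ← Real.sqrt_mul hΔ2,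
      show (1 + Δ) / 2 * ((1 - Δ) / 2) = (1/2)^2 * (1 - Δ^2) by ring,
      Real.sqrt_mul (by positivity), Real.sqrt_sq (by norm_num)]
    ring
  have hhsR : Jt * Real.sqrt (2 * (1 + Δ)) * s = Jt * Real.sqrt (1 - Δ ^ 2) := by
    rw [hsin, mul_assoc, ← Real.sqrt_mul (by positivity),
      show 2 * (1 + Δ) * ((1 - Δ) / 2) = 1 - Δ^2 by ring]
  have hhcR : Jt * Real.sqrt (2 * (1 + Δ)) * c = Jt * (1 + Δ) := by
    rw [hcos, mul_assoc, ← Real.sqrt_mul (by positivity),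
      show 2 * (1 + Δ) * ((1 + Δ) / 2) = (1 + Δ)^2 by ring,
      Real.sqrt_sq (by linarith)]
  have hdC : (c:ℂ) * (c:ℂ) - (s:ℂ) * (s:ℂ) = (Δ:ℂ) := by exact_mod_cast hdR
  have hrC : 2 * ((c:ℂ) * (s:ℂ)) = ((Real.sqrt (1 - Δ ^ 2) : ℝ) : ℂ) := by
    exact_mod_cast hrR
  have hhsC : ((Jt * Real.sqrt (2 * (1 + Δ)) : ℝ) : ℂ) * (s:ℂ)
      = (Jt:ℂ) * ((Real.sqrt (1 - Δ ^ 2) : ℝ) : ℂ) := by exact_mod_cast hhsR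
  have hhcC : ((Jt * Real.sqrt (2 * (1 + Δ)) : ℝ) : ℂ) * (c:ℂ)
      = (Jt:ℂ) * (1 + (Δ:ℂ)) := by exact_mod_cast hhcR
  -- the rotation as a tensor product of 2×2 rotations
  set u : Fin L → ℝ := fun j => ((-1:ℝ)^(j:ℕ) * φ) / 2 with hu
  have hR : Rstag L φ = kronAll L (fun j => Rot (u j)) := by
    have hj : ∀ j : Fin L,
        NormedSpace.exp ((I * (-1 : ℂ) ^ (j:ℕ) * (φ:ℂ)) • sy) = Rot (u j) := by
      intro j
      have harg : (I * (-1 : ℂ) ^ (j:ℕ) * (φ:ℂ)) • sy = ((u j : ℝ) : ℂ) • J2 := by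
        ext a b
        fin_cases a <;> fin_cases b <;>
          simp [sy, J2, hu] <;>
          (try push_cast) <;>
          first
            | ring1
            | linear_combination ((-1:ℂ)^(j:ℕ) * (φ:ℂ) / 2) * Complex.I_sq
            | linear_combination (-((-1:ℂ)^(j:ℕ) * (φ:ℂ) / 2)) * Complex.I_sq
      rw [harg, exp_smul_J2]
    unfold Rstag
    exact congrArg (kronAll L) (funext hj)
  have hRR' : kronAll L (fun j => Rot (u j)) * kronAll L (fun j => Rot (-(u j))) = 1 := by
    rw [kronAll_mul,
      show (fun j => Rot (u j) * Rot (-(u j))) = fun _ => (1 : Matrix (Fin 2) (Fin 2) ℂ)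
        from funext fun j => Rot_mul_Rot_neg (u j),
      kronAll_one]
  have hinv : (Rstag L φ)⁻¹ = kronAll L (fun j => Rot (-(u j))) := by
    rw [hR]; exact Matrix.inv_eq_right_inv hRR'
  have hconj : ∀ (j : Fin L) (A : Matrix (Fin 2) (Fin 2) ℂ),
      kronAll L (fun k => Rot (-(u k))) * onSite L j A * kronAll L (fun k => Rot (u k))
        = onSite L j (Rot (-(u j)) * A * Rot (u j)) := by
    intro j A
    unfold onSite
    rw [kronAll_mul, kronAll_mul]
    refine congrArg (kronAll L) (funext fun k => ?_)
    by_cases hk : k = j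
    · subst hk; simp
    · simp only [if_neg hk]
      rw [mul_one, Rot_neg_mul_Rot]
  -- parity facts
  have hcos_par : ∀ n : ℕ, Real.cos ((-1:ℝ)^n * φ) = c := by
    intro n
    rcases Nat.even_or_odd n with hn | hn
    · rw [show ((-1:ℝ))^n = 1 from hn.neg_one_pow, one_mul]
    · rw [show ((-1:ℝ))^n = -1 from hn.neg_one_pow, neg_one_mul, Real.cos_neg]
  have hsin_par : ∀ n : ℕ, ((Real.sin ((-1:ℝ)^n * φ) : ℝ) : ℂ) = (-1:ℂ)^n * (s:ℂ) := by
    intro n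
    rcases Nat.even_or_odd n with hn | hn
    · rw [show ((-1:ℝ))^n = 1 from hn.neg_one_pow, show ((-1:ℂ))^n = 1 from hn.neg_one_pow,
        one_mul, one_mul]
    · rw [show ((-1:ℝ))^n = -1 from hn.neg_one_pow, show ((-1:ℂ))^n = -1 from hn.neg_one_pow,
        neg_one_mul, Real.sin_neg, neg_one_mul, hsdef]
      push_cast; ring
  -- conjugated one-site operators
  have hXgen : ∀ k : Fin L,
      kronAll L (fun k => Rot (-(u k))) * onSite L k sx * kronAll L (fun k => Rot (u k))
        = (c:ℂ) • onSite L k sx - ((-1:ℂ)^(k:ℕ) * (s:ℂ)) • onSite L k sz := by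
    intro k
    rw [hconj k, conj_sx (u k),
      show 2 * u k = (-1:ℝ)^(k:ℕ) * φ from by simp only [hu]; ring,
      onSite_sub, onSite_smul, onSite_smul, hcos_par, hsin_par]
  have hZgen : ∀ k : Fin L,
      kronAll L (fun k => Rot (-(u k))) * onSite L k sz * kronAll L (fun k => Rot (u k))
        = ((-1:ℂ)^(k:ℕ) * (s:ℂ)) • onSite L k sx + (c:ℂ) • onSite L k sz := by
    intro k
    rw [hconj k, conj_sz (u k),
      show 2 * u k = (-1:ℝ)^(k:ℕ) * φ from by simp only [hu]; ring,
      onSite_add, onSite_smul, onSite_smul, hcos_par, hsin_par]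
  have hYgen : ∀ k : Fin L,
      kronAll L (fun k => Rot (-(u k))) * onSite L k sy * kronAll L (fun k => Rot (u k))
        = onSite L k sy := by
    intro k
    rw [hconj k, conj_sy (u k)]
  -- per-site computation
  have key : ∀ j : Fin L,
      (Jt:ℂ) • (kronAll L (fun k => Rot (-(u k)))
          * (onSite L j sx * onSite L (j + 1) sx
            + (Δ : ℂ) • (onSite L j sy * onSite L (j + 1) sy)
            + onSite L j sz * onSite L (j + 1) sz)
          * kronAll L (fun k => Rot (u k)))
        - ((Jt * Real.sqrt (2 * (1 + Δ)) : ℝ) : ℂ)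
            • (kronAll L (fun k => Rot (-(u k))) * onSite L j sz
                * kronAll L (fun k => Rot (u k)))
      = (Jt:ℂ) • ((Δ : ℂ) • (onSite L j sx * onSite L (j + 1) sx
              + onSite L j sy * onSite L (j + 1) sy
              + onSite L j sz * onSite L (j + 1) sz)
            - ((1 : ℂ) + (Δ : ℂ)) • onSite L j sz
            + (-1 : ℂ) ^ (j : ℕ) • ((Real.sqrt (1 - Δ ^ 2) : ℝ) : ℂ) •
                (onSite L j sx * onSite L (j + 1) sz
                  - onSite L j sz * onSite L (j + 1) sx
                  - onSite L j sx)) := by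
    intro j
    have hε : (-1:ℂ)^(j:ℕ) * (-1:ℂ)^(j:ℕ) = 1 := by rw [← mul_pow]; norm_num
    have hX' := hXgen (j+1)
    have hZ' := hZgen (j+1)
    rw [fin_flip L hLeven.two_dvd j] at hX' hZ'
    rw [neg_mul, neg_smul, sub_neg_eq_add] at hX'
    rw [neg_mul] at hZ'
    rw [mul_add, mul_add, add_mul, add_mul, Matrix.mul_smul, Matrix.smul_mul,
      conj_mul_split _ _ _ _ hRR', conj_mul_split _ _ _ _ hRR',
      conj_mul_split _ _ _ _ hRR',
      hXgen j, hX', hYgen j, hYgen (j+1), hZgen j, hZ']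
    exact per_site _ _ _ _ _ _ _ _ _ _ _ _ _ hε hdC hrC hhsC hhcC
  -- assembling
  rw [hinv, hR]
  calc kronAll L (fun j => Rot (-(u j))) * Hmap L Jt Δ (Jt * Real.sqrt (2 * (1 + Δ)))
        * kronAll L (fun j => Rot (u j))
      = ∑ j : Fin L,
          ((Jt:ℂ) • (kronAll L (fun k => Rot (-(u k)))
              * (onSite L j sx * onSite L (j + 1) sx
                + (Δ : ℂ) • (onSite L j sy * onSite L (j + 1) sy)
                + onSite L j sz * onSite L (j + 1) sz)
              * kronAll L (fun k => Rot (u k)))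
            - ((Jt * Real.sqrt (2 * (1 + Δ)) : ℝ) : ℂ)
                • (kronAll L (fun k => Rot (-(u k))) * onSite L j sz
                    * kronAll L (fun k => Rot (u k)))) := by
        unfold Hmap
        rw [mul_sub, sub_mul, Matrix.mul_smul, Matrix.smul_mul, Matrix.mul_smul,
          Matrix.smul_mul, Finset.mul_sum, Finset.sum_mul, Finset.mul_sum, Finset.sum_mul,
          Finset.smul_sum, Finset.smul_sum, ← Finset.sum_sub_distrib]
    _ = ∑ j : Fin L,
          (Jt:ℂ) • ((Δ : ℂ) • (onSite L j sx * onSite L (j + 1) sx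
              + onSite L j sy * onSite L (j + 1) sy
              + onSite L j sz * onSite L (j + 1) sz)
            - ((1 : ℂ) + (Δ : ℂ)) • onSite L j sz
            + (-1 : ℂ) ^ (j : ℕ) • ((Real.sqrt (1 - Δ ^ 2) : ℝ) : ℂ) •
                (onSite L j sx * onSite L (j + 1) sz
                  - onSite L j sz * onSite L (j + 1) sx
                  - onSite L j sx)) := Finset.sum_congr rfl fun j _ => key j
    _ = _ := (Finset.smul_sum).symm

end
end
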